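/- If g : X → ℝ is quasilinear (both quasi-concave and quasi-convex) on a convex set X ⊆ ℝⁿ, and h : ℝ → ℝ is quasi-concave on an interval containing g(X), then the composition h ∘ g is quasi-concave on X. -/

import Mathlib

/-- If `u ≤ c ≤ v`, `u, v ∈ I`, and `h` is quasi-concave on `I`, then
`min (h u) (h v) ≤ h c`. -/
lemma aux_between {h : ℝ → ℝ} {I : Set ℝ}
    (hh : ∀ u ∈ I, ∀ v ∈ I, ∀ t ∈ Set.Icc (0:ℝ) 1,
      min (h u) (h v) ≤ h (t * u + (1 - t) * v))
    {u v c : ℝ} (hu : u ∈ I) (hv : v ∈ I) (h1 : u ≤ c) (h2 : c ≤ v) :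
    min (h u) (h v) ≤ h c := by
  rcases eq_or_lt_of_le (h1.trans h2) with heq | hlt
  · have : c = u := le_antisymm (heq ▸ h2) h1
    subst this
    exact min_le_left _ _
  · set t := (v - c) / (v - u) with ht
    have hd : 0 < v - u := by linarith
    have ht0 : 0 ≤ t := div_nonneg (by linarith) hd.le
    have ht1 : t ≤ 1 := (div_le_one hd).2 (by linarith)
    have key := hh u hu v hv t ⟨ht0, ht1⟩
    have : t * u + (1 - t) * v = c := by
      rw [ht]
      field_simp [ht]
      ring
    rwa [this] at key

/-- Quasilinear `g` composed with quasi-concave `h` is quasi-concave. -/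
theorem stmt_0 {n : ℕ} (X : Set (Fin n → ℝ)) (hX : Convex ℝ X)
    (g : (Fin n → ℝ) → ℝ) (h : ℝ → ℝ) (I : Set ℝ) (hI : I.OrdConnected)
    (hgI : g '' X ⊆ I)
    (hg_qcave : ∀ x ∈ X, ∀ y ∈ X, ∀ t ∈ Set.Icc (0:ℝ) 1,
      min (g x) (g y) ≤ g (t • x + (1 - t) • y))
    (hg_qvex : ∀ x ∈ X, ∀ y ∈ X, ∀ t ∈ Set.Icc (0:ℝ) 1,
      g (t • x + (1 - t) • y) ≤ max (g x) (g y))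
    (hh_qcave : ∀ u ∈ I, ∀ v ∈ I, ∀ t ∈ Set.Icc (0:ℝ) 1,
      min (h u) (h v) ≤ h (t * u + (1 - t) * v)) :
    ∀ x ∈ X, ∀ y ∈ X, ∀ t ∈ Set.Icc (0:ℝ) 1,
      min (h (g x)) (h (g y)) ≤ h (g (t • x + (1 - t) • y)) := by
  intro x hx y hy t ht
  have hxI : g x ∈ I := hgI ⟨x, hx, rfl⟩
  have hyI : g y ∈ I := hgI ⟨y, hy, rfl⟩
  have h1 := hg_qcave x hx y hy t ht
  have h2 := hg_qvex x hx y hy t ht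
  rcases le_total (g x) (g y) with hle | hle
  · rw [min_eq_left hle] at h1
    rw [max_eq_right hle] at h2
    exact aux_between hh_qcave hxI hyI h1 h2
  · rw [min_eq_right hle] at h1
    rw [max_eq_left hle] at h2
    exact min_comm (h (g x)) (h (g y)) ▸ aux_between hh_qcave hyI hxI h1 h2
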